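/- For t ∈ [0,1] ⊂ ℝ, let s_t = √(2(1+t²)) (real square root) and define holomorphic functions A_t, B_t on ℂ∖{0} by A_t(x) = (t·x + x⁻¹)/s_t and B_t(x) = (x − t·x⁻¹)·exp(−iπt/2)/s_t. Then: (i) for every t ∈ [0,1] and x ∈ ℂ∖{0}, the Wronskian satisfies A_t(x)·B_t′(x) − A_t′(x)·B_t(x) = exp(−iπt/2)·x⁻¹ (derivatives are complex derivatives in x), which is nonvanishing; (ii) at t = 0 one has A_0(x) = 1/(√2·x) and B_0(x) = x/√2; and (iii) at t = 1 one has A_1(x) = (x + x⁻¹)/2 and B_1(x) = (x − x⁻¹)/(2i). -/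

import Mathlib

open Complex

/-- Example 1.9: the family `σ_t = A_t(x) dz + B_t(x) dy`, with
`A_t(x) = (t·x + x⁻¹)/√(2(1+t²))` and `B_t(x) = (x − t·x⁻¹)·e^{−iπt/2}/√(2(1+t²))`,
has Wronskian `A_t·B_t′ − A_t′·B_t = e^{−iπt/2}·x⁻¹` (nonvanishing on `ℂ∖{0}`) for all
`t ∈ [0,1]`, and connects `σ_0 = α_{−1} = (1/√2)(x⁻¹ dz + x dy)` to
`σ_1 = α′ = ½(x + 1/x) dz + (1/(2i))(x − 1/x) dy`. -/
theorem wronskian_sigma_t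
    (s : ℝ → ℝ) (hs : s = fun t => Real.sqrt (2 * (1 + t ^ 2)))
    (A B : ℝ → ℂ → ℂ)
    (hA : A = fun (t : ℝ) (x : ℂ) => ((t : ℂ) * x + x⁻¹) / ((s t : ℝ) : ℂ))
    (hB : B = fun (t : ℝ) (x : ℂ) =>
      (x - (t : ℂ) * x⁻¹) * Complex.exp (-Complex.I * Real.pi * t / 2) / ((s t : ℝ) : ℂ)) :
    (∀ t ∈ Set.Icc (0 : ℝ) 1, ∀ x : ℂ, x ≠ 0 →
      A t x * deriv (B t) x - deriv (A t) x * B t x =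
        Complex.exp (-Complex.I * Real.pi * t / 2) * x⁻¹ ∧
      A t x * deriv (B t) x - deriv (A t) x * B t x ≠ 0) ∧
    (∀ x : ℂ, x ≠ 0 →
      A 0 x = 1 / ((Real.sqrt 2 : ℂ) * x) ∧ B 0 x = x / (Real.sqrt 2 : ℂ)) ∧
    (∀ x : ℂ, x ≠ 0 →
      A 1 x = (x + x⁻¹) / 2 ∧ B 1 x = (x - x⁻¹) / (2 * Complex.I)) := by
  have hspos : ∀ t : ℝ, 0 < s t := by
    intro t; rw [hs]; positivity
  have hsq : ∀ t : ℝ, ((s t : ℝ) : ℂ) ^ 2 = 2 * (1 + (t : ℂ) ^ 2) := by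
    intro t
    have : (s t) ^ 2 = 2 * (1 + t ^ 2) := by
      rw [hs]; exact Real.sq_sqrt (by positivity)
    rw [← Complex.ofReal_pow, this]; push_cast; ring
  have hsne : ∀ t : ℝ, ((s t : ℝ) : ℂ) ≠ 0 := fun t => by
    exact_mod_cast (hspos t).ne'
  refine ⟨?_, ?_, ?_⟩
  · intro t ht x hx
    set c := Complex.exp (-Complex.I * Real.pi * t / 2) with hc
    have hcne : c ≠ 0 := Complex.exp_ne_zero _
    have hA' : HasDerivAt (A t) (((t : ℂ) * 1 + -(x ^ 2)⁻¹) / ((s t : ℝ) : ℂ)) x := by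
      rw [hA]
      exact (((hasDerivAt_id x).const_mul (t : ℂ)).add (hasDerivAt_inv hx)).div_const _
    have hB' : HasDerivAt (B t) ((1 - (t : ℂ) * -(x ^ 2)⁻¹) * c / ((s t : ℝ) : ℂ)) x := by
      rw [hB]
      exact (((hasDerivAt_id x).sub ((hasDerivAt_inv hx).const_mul (t : ℂ))).mul_const c).div_const _
    rw [hA'.deriv, hB'.deriv]
    have hAx : A t x = ((t : ℂ) * x + x⁻¹) / ((s t : ℝ) : ℂ) := by rw [hA]
    have hBx : B t x = (x - (t : ℂ) * x⁻¹) * c / ((s t : ℝ) : ℂ) := by rw [hB]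
    rw [hAx, hBx]
    have h2 := hsq t
    have key : ((t : ℂ) * x + x⁻¹) / ((s t : ℝ) : ℂ) * ((1 - (t : ℂ) * -(x ^ 2)⁻¹) * c / ((s t : ℝ) : ℂ)) -
        ((t : ℂ) * 1 + -(x ^ 2)⁻¹) / ((s t : ℝ) : ℂ) * ((x - (t : ℂ) * x⁻¹) * c / ((s t : ℝ) : ℂ)) = c * x⁻¹ := by
      have hne2 : (2 * (1 + (t : ℂ) ^ 2)) ≠ 0 := by
        rw [← h2]; exact pow_ne_zero _ (hsne t)
      have expand : ((t : ℂ) * x + x⁻¹) / ((s t : ℝ) : ℂ) * ((1 - (t : ℂ) * -(x ^ 2)⁻¹) * c / ((s t : ℝ) : ℂ)) -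
          ((t : ℂ) * 1 + -(x ^ 2)⁻¹) / ((s t : ℝ) : ℂ) * ((x - (t : ℂ) * x⁻¹) * c / ((s t : ℝ) : ℂ)) =
          2 * (1 + (t : ℂ) ^ 2) * c * x⁻¹ / ((s t : ℝ) : ℂ) ^ 2 := by
        field_simp [hx, hsne t]
        ring
      rw [expand, h2, div_eq_iff hne2]
      ring
    exact ⟨key, key ▸ mul_ne_zero hcne (inv_ne_zero hx)⟩
  · intro x hx
    have hr : ((Real.sqrt (2 * (1 + (0:ℝ) ^ 2)) : ℝ) : ℂ) = (Real.sqrt 2 : ℂ) := by norm_num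
    have h2 : ((Real.sqrt 2 : ℝ) : ℂ) ≠ 0 := by
      exact_mod_cast (Real.sqrt_pos.mpr two_pos).ne'
    constructor
    · rw [hA]; simp only [hs]; rw [hr]; push_cast; field_simp; ring
    · rw [hB]; simp only [hs]; rw [hr]; push_cast; simp [Complex.exp_zero]
  · intro x hx
    have h1 : s 1 = 2 := by
      rw [hs]; norm_num
    have hepi : Complex.exp (-Complex.I * Real.pi * ((1:ℝ):ℂ) / 2) = -Complex.I := by
      rw [show -Complex.I * (Real.pi : ℂ) * ((1:ℝ):ℂ) / 2 = -((Real.pi : ℂ) / 2) * Complex.I by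
        push_cast; ring]
      rw [Complex.exp_mul_I, Complex.cos_neg, Complex.sin_neg, Complex.cos_pi_div_two,
        Complex.sin_pi_div_two]
      ring
    constructor
    · simp only [hA, h1]; push_cast; ring
    · simp only [hB, h1, hepi]
      push_cast
      have : (2 * Complex.I) ≠ 0 := by simp [Complex.I_ne_zero]
      field_simp
      linear_combination (1 - x ^ 2) * Complex.I_sq
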